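/- Let τ ∈ ℝ and α ∈ ℂ with 0 < |α| ≤ 1/2. For ω ∈ ℝ let ρ(ω) be the 2×2 matrix with diagonal entries 1/2, top-right entry exp(−i·ω·τ)·α, and bottom-left entry exp(i·ω·τ)·conj(α); let ρ'(ω) denote its entrywise derivative in ω. Let γ₊ = 1/2 + |α|, γ₋ = 1/2 − |α| with corresponding orthonormal eigenvectors v₊, v₋ of ρ(ω) (namely v_± = (1/√2)(e₁ ± (conj(z)/|z|)e₂) with z = exp(−i·ω·τ)·α). Then the quantum Fisher information 2·Σ_{(i,j): γ_i + γ_j > 0} |⟨v_i, ρ'(ω) v_j⟩|²/(γ_i + γ_j), where i, j range over {+, −}, equals 4·τ²·|α|². -/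

import Mathlib

open scoped BigOperators

/-- The standard inner product on `ℂ²`, conjugate-linear in the first slot. -/
noncomputable def inn2 (x y : Fin 2 → ℂ) : ℂ := ∑ i, (starRingEnd ℂ) (x i) * y i

/-- For the qubit family `ρ(ω) = [[1/2, e^{−iωτ}α],[e^{iωτ}conj α, 1/2]]`
with `0 < |α| ≤ 1/2`, eigenvalues `γ± = 1/2 ± |α|` and eigenvectors
`v± = (1/√2)(e₁ ± (conj z/|z|)e₂)`, `z = e^{−iωτ}α`, the quantum Fisher information
`2·Σ_{γ_i+γ_j>0} |⟨v_i, ρ'(ω)v_j⟩|²/(γ_i+γ_j)` equals `4τ²|α|²`. -/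
theorem stmt10 (τ : ℝ) (α : ℂ) (hα : 0 < ‖α‖) (hα' : ‖α‖ ≤ 1/2)
    (ω : ℝ)
    (ρ : ℝ → Matrix (Fin 2) (Fin 2) ℂ)
    (hρ : ∀ w : ℝ, ρ w = !![(1/2 : ℂ), Complex.exp (-(Complex.I * w * τ)) * α;
        Complex.exp (Complex.I * w * τ) * (starRingEnd ℂ) α, (1/2 : ℂ)])
    (ρ' : Matrix (Fin 2) (Fin 2) ℂ)
    (hρ' : ∀ i j : Fin 2, HasDerivAt (fun w : ℝ => ρ w i j) (ρ' i j) ω)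
    (γ : Fin 2 → ℝ) (hγ : γ = ![1/2 + ‖α‖, 1/2 - ‖α‖])
    (z : ℂ) (hz : z = Complex.exp (-(Complex.I * ω * τ)) * α)
    (v : Fin 2 → Fin 2 → ℂ)
    (hv : v = ![![(1 / (Real.sqrt 2 : ℂ)),
          (1 / (Real.sqrt 2 : ℂ)) * ((starRingEnd ℂ) z / (‖z‖ : ℂ))],
        ![(1 / (Real.sqrt 2 : ℂ)),
          -((1 / (Real.sqrt 2 : ℂ)) * ((starRingEnd ℂ) z / (‖z‖ : ℂ)))]]) :
    2 * ∑ i : Fin 2, ∑ j : Fin 2,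
        (if 0 < γ i + γ j then
          (‖inn2 (v i) (ρ'.mulVec (v j))‖)^2 / (γ i + γ j)
        else 0)
      = 4 * τ^2 * (‖α‖)^2 := by

  -- abs z = abs α
  have habsz : ‖z‖ = ‖α‖ := by
    rw [hz, norm_mul, Complex.norm_exp]
    have : (-(Complex.I * ω * τ)).re = 0 := by simp
    rw [this, Real.exp_zero, one_mul]
  have hz0 : z ≠ 0 := by
    intro h; rw [h, norm_zero] at habsz; linarith
  -- derivative entries
  have hderiv01 : HasDerivAt (fun w : ℝ => ρ w 0 1) (-(Complex.I * τ) * z) ω := by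
    have h1 : HasDerivAt (fun w : ℝ => -(Complex.I * (w:ℂ) * τ)) (-(Complex.I * τ)) ω := by
      have := (Complex.ofRealCLM.hasDerivAt (x := ω)).const_mul Complex.I
      have h2 := (this.mul_const (τ:ℂ)).neg
      exact (by simpa using this.mul_const (τ:ℂ) : HasDerivAt (fun w : ℝ => Complex.I * (w:ℂ) * τ) (Complex.I * τ) ω).neg
    have h3 := (h1.cexp).mul_const α
    have heq : (fun w : ℝ => ρ w 0 1) = fun w : ℝ => Complex.exp (-(Complex.I * w * τ)) * α := by
      funext w; rw [hρ w]; simp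
    rw [heq, hz]
    refine h3.congr_deriv ?_
    ring
  have hderiv10 : HasDerivAt (fun w : ℝ => ρ w 1 0) ((Complex.I * τ) * (starRingEnd ℂ) z) ω := by
    have h1 : HasDerivAt (fun w : ℝ => Complex.I * (w:ℂ) * τ) (Complex.I * τ) ω := by
      have := (Complex.ofRealCLM.hasDerivAt (x := ω)).const_mul Complex.I
      have h2 := this.mul_const (τ:ℂ)
      simpa using h2
    have h3 := (h1.cexp).mul_const ((starRingEnd ℂ) α)
    have heq : (fun w : ℝ => ρ w 1 0)
        = fun w : ℝ => Complex.exp (Complex.I * w * τ) * (starRingEnd ℂ) α := by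
      funext w; rw [hρ w]; simp
    rw [heq, hz]
    refine h3.congr_deriv ?_
    rw [map_mul, ← Complex.exp_conj]
    simp
    ring
  have hderiv00 : HasDerivAt (fun w : ℝ => ρ w 0 0) 0 ω := by
    have heq : (fun w : ℝ => ρ w 0 0) = fun _ : ℝ => (1/2 : ℂ) := by
      funext w; rw [hρ w]; simp
    rw [heq]; exact hasDerivAt_const _ _
  have hderiv11 : HasDerivAt (fun w : ℝ => ρ w 1 1) 0 ω := by
    have heq : (fun w : ℝ => ρ w 1 1) = fun _ : ℝ => (1/2 : ℂ) := by
      funext w; rw [hρ w]; simp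
    rw [heq]; exact hasDerivAt_const _ _
  have h00 : ρ' 0 0 = 0 := (hρ' 0 0).unique hderiv00
  have h11 : ρ' 1 1 = 0 := (hρ' 1 1).unique hderiv11
  have h01 : ρ' 0 1 = -(Complex.I * τ) * z := (hρ' 0 1).unique hderiv01
  have h10 : ρ' 1 0 = (Complex.I * τ) * (starRingEnd ℂ) z := (hρ' 1 0).unique hderiv10
  -- key algebraic facts
  have hs2 : ((Real.sqrt 2 : ℝ) : ℂ) * ((Real.sqrt 2 : ℝ) : ℂ) = 2 := by
    norm_cast; exact Real.mul_self_sqrt (by norm_num)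
  have hzz : z * (starRingEnd ℂ) z = ((‖z‖ : ℝ) : ℂ) ^ 2 := by
    rw [Complex.mul_conj, Complex.normSq_eq_norm_sq]; push_cast; ring
  have habs0 : ((‖z‖ : ℝ) : ℂ) ≠ 0 := by
    simp [hz0]
  have hs0 : ((Real.sqrt 2 : ℝ) : ℂ) ≠ 0 := by
    norm_cast; positivity
  -- the four inner products
  have hd00 : inn2 (v 0) (ρ'.mulVec (v 0)) = 0 := by
    simp only [hv, inn2, Matrix.mulVec, dotProduct, Fin.sum_univ_two,
      Matrix.cons_val_zero, Matrix.cons_val_one, Matrix.head_cons, h00, h01, h10, h11]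
    simp only [map_mul, map_div₀, map_neg, map_inv₀, Complex.conj_conj, map_one, Complex.conj_ofReal]
    field_simp
    ring_nf
  have hd11 : inn2 (v 1) (ρ'.mulVec (v 1)) = 0 := by
    simp only [hv, inn2, Matrix.mulVec, dotProduct, Fin.sum_univ_two,
      Matrix.cons_val_zero, Matrix.cons_val_one, Matrix.head_cons, h00, h01, h10, h11]
    simp only [map_mul, map_div₀, map_neg, map_inv₀, Complex.conj_conj, map_one, Complex.conj_ofReal]
    field_simp
    ring_nf
  have hd01 : inn2 (v 0) (ρ'.mulVec (v 1)) = Complex.I * τ * (‖z‖ : ℂ) := by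
    simp only [hv, inn2, Matrix.mulVec, dotProduct, Fin.sum_univ_two,
      Matrix.cons_val_zero, Matrix.cons_val_one, Matrix.head_cons, h00, h01, h10, h11]
    simp only [map_mul, map_div₀, map_neg, Complex.conj_conj, map_one, Complex.conj_ofReal]
    field_simp
    linear_combination (2 * ((‖z‖ :ℝ):ℂ) * Complex.I * (τ:ℂ)) * hzz - (((‖z‖ :ℝ):ℂ)^3 * Complex.I * (τ:ℂ)) * hs2
  have hd10 : inn2 (v 1) (ρ'.mulVec (v 0)) = -(Complex.I * τ * (‖z‖ : ℂ)) := by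
    simp only [hv, inn2, Matrix.mulVec, dotProduct, Fin.sum_univ_two,
      Matrix.cons_val_zero, Matrix.cons_val_one, Matrix.head_cons, h00, h01, h10, h11]
    simp only [map_mul, map_div₀, map_neg, Complex.conj_conj, map_one, Complex.conj_ofReal]
    field_simp
    linear_combination (-(2 * ((‖z‖ :ℝ):ℂ) * Complex.I * (τ:ℂ))) * hzz + (((‖z‖ :ℝ):ℂ)^3 * Complex.I * (τ:ℂ)) * hs2
  -- abs of the cross terms
  have habscross : ‖Complex.I * τ * (‖z‖ : ℂ)‖ = |τ| * ‖α‖ := by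
    rw [norm_mul, norm_mul, Complex.norm_I, Complex.norm_real, Complex.norm_real,
      Real.norm_eq_abs, Real.norm_eq_abs, one_mul, abs_of_nonneg (norm_nonneg z), habsz]
  -- assemble
  rw [Fin.sum_univ_two]
  rw [Fin.sum_univ_two, Fin.sum_univ_two]
  rw [hd00, hd01, hd10, hd11, hγ]
  simp only [Matrix.cons_val_zero, Matrix.cons_val_one, Matrix.head_cons, map_zero, norm_zero,
    norm_neg, habscross]
  have ha : ‖α‖ > 0 := hα
  rw [if_pos (by linarith), if_pos (by linarith), if_pos (by linarith)]
  have hlast : (if 0 < 1/2 - ‖α‖ + (1/2 - ‖α‖) then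
      ((0:ℝ))^2 / (1/2 - ‖α‖ + (1/2 - ‖α‖)) else 0) = 0 := by
    split <;> simp
  rw [hlast]
  have : (1/2 + ‖α‖ + (1/2 - ‖α‖)) = 1 := by ring
  rw [this]
  have h2 : (1/2 - ‖α‖ + (1/2 + ‖α‖)) = 1 := by ring
  rw [h2]
  rw [mul_pow, sq_abs]
  ring
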